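/- Let G be a finite simple graph and (a,b) an edge of G with S_{a,b} ≠ ∅ and k_min((a,b)) ≤ φ_G((a,b)). Then every edge e' ≠ (a,b) of G whose truss number changes after deleting (a,b) (i.e., φ_{G−(a,b)}(e') ≠ φ_G(e')) satisfies k_min((a,b)) ≤ φ_G(e') ≤ φ_G((a,b)). -/

import Mathlib

open SimpleGraph

variable {V : Type*}

/-- `H` is a `k`-truss of `G`: a connected subgraph with at least one edge in which
every edge lies in at least `k - 2` triangles of `H` (i.e. the endpoints of every edge
have at least `k - 2` common neighbors in `H`). -/
def IsTruss (G : SimpleGraph V) (k : ℕ) (H : G.Subgraph) : Prop :=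
  H.Connected ∧ H.edgeSet.Nonempty ∧
    ∀ a b : V, H.Adj a b → k - 2 ≤ {c : V | H.Adj a c ∧ H.Adj b c}.ncard

/-- The truss number `φ_G(e)` of an edge `e`: the largest `k` such that `e` lies in some
`k`-truss of `G`. -/
noncomputable def trussNumber (G : SimpleGraph V) (e : Sym2 V) : ℕ :=
  sSup {k : ℕ | ∃ H : G.Subgraph, IsTruss G k H ∧ e ∈ H.edgeSet}

/-- The support of the edge `(a, b)` in a subgraph `H`: the number of triangles of `H`
containing it, i.e. the number of common neighbors of `a` and `b` in `H`. -/
noncomputable def suppIn {G : SimpleGraph V} (H : G.Subgraph) (a b : V) : ℕ :=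
  {c : V | H.Adj a c ∧ H.Adj b c}.ncard

/-- The support of the edge `(a, b)` in `G`. -/
noncomputable def suppG (G : SimpleGraph V) (a b : V) : ℕ :=
  {c : V | G.Adj a c ∧ G.Adj b c}.ncard

/-- `S_{a,b}`: the common neighbors of `a` and `b` in `G`. -/
def commonNbrs (G : SimpleGraph V) (a b : V) : Set V :=
  {c : V | G.Adj a c ∧ G.Adj b c}

/-- `E_{S_{a,b} ↔ {a,b}}`: the edges of `G` joining a common neighbor of `a` and `b`
to `a` or to `b`. -/
def sideEdges (G : SimpleGraph V) (a b : V) : Set (Sym2 V) :=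
  {e | ∃ c, G.Adj a c ∧ G.Adj b c ∧ (e = s(a, c) ∨ e = s(b, c))}

/-- `k_min((a,b))`: minimum truss number among the edges of `E_{S_{a,b} ↔ {a,b}}`. -/
noncomputable def kmin (G : SimpleGraph V) (a b : V) : ℕ :=
  sInf (trussNumber G '' sideEdges G a b)

/-- `k_max((a,b))`: maximum truss number among the edges of `E_{S_{a,b} ↔ {a,b}}`. -/
noncomputable def kmax (G : SimpleGraph V) (a b : V) : ℕ :=
  sSup (trussNumber G '' sideEdges G a b)

/-- `G + (a,b)`: the graph obtained from `G` by inserting the edge `(a, b)`. -/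
def insertEdge (G : SimpleGraph V) (a b : V) : SimpleGraph V :=
  G ⊔ fromEdgeSet {s(a, b)}

/-! ### Auxiliary lemmas -/

section Aux

/-- Lift a subgraph of a smaller graph to a subgraph of a bigger graph. -/
def liftSub {G₁ G₂ : SimpleGraph V} (h : G₁ ≤ G₂) (H : G₁.Subgraph) : G₂.Subgraph where
  verts := H.verts
  Adj := H.Adj
  adj_sub := fun hx => h (H.adj_sub hx)
  edge_vert := fun hx => H.edge_vert hx
  symm := H.symm

lemma liftSub_isTruss {G₁ G₂ : SimpleGraph V} (h : G₁ ≤ G₂) {k : ℕ} {H : G₁.Subgraph}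
    (ht : IsTruss G₁ k H) : IsTruss G₂ k (liftSub h H) :=
  ⟨⟨ht.1.coe⟩, ht.2.1, ht.2.2⟩

lemma liftSub_edge {G₁ G₂ : SimpleGraph V} (h : G₁ ≤ G₂) {H : G₁.Subgraph} {e : Sym2 V}
    (he : e ∈ H.edgeSet) : e ∈ (liftSub h H).edgeSet := he

/-- Restrict a subgraph of `G` avoiding a set of edges to a subgraph of `G.deleteEdges s`. -/
def restrictSub (G : SimpleGraph V) (s : Set (Sym2 V)) (H : G.Subgraph)
    (hH : ∀ x y, H.Adj x y → s(x, y) ∉ s) : (G.deleteEdges s).Subgraph where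
  verts := H.verts
  Adj := H.Adj
  adj_sub := fun {x y} hx => by
    rw [SimpleGraph.deleteEdges_adj]
    exact ⟨H.adj_sub hx, hH x y hx⟩
  edge_vert := fun hx => H.edge_vert hx
  symm := H.symm

lemma restrictSub_isTruss {G : SimpleGraph V} {s : Set (Sym2 V)} {H : G.Subgraph}
    (hH : ∀ x y, H.Adj x y → s(x, y) ∉ s) {k : ℕ} (ht : IsTruss G k H) :
    IsTruss (G.deleteEdges s) k (restrictSub G s H hH) :=
  ⟨⟨ht.1.coe⟩, ht.2.1, ht.2.2⟩

lemma trussSet_bddAbove [Fintype V] (G : SimpleGraph V) (e : Sym2 V) :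
    BddAbove {k : ℕ | ∃ H : G.Subgraph, IsTruss G k H ∧ e ∈ H.edgeSet} := by
  refine ⟨Fintype.card V + 2, ?_⟩
  rintro k ⟨H, ⟨-, ⟨f, hf⟩, htri⟩, -⟩
  induction f using Sym2.ind with
  | _ x y =>
    have h1 := htri x y hf
    have h2 := Set.ncard_le_ncard (Set.subset_univ {c : V | H.Adj x c ∧ H.Adj y c})
      Set.finite_univ
    rw [Set.ncard_univ, Nat.card_eq_fintype_card] at h2
    omega

lemma truss_two {G : SimpleGraph V} {e : Sym2 V} (he : e ∈ G.edgeSet) :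
    ∃ H : G.Subgraph, IsTruss G 2 H ∧ e ∈ H.edgeSet := by
  induction e using Sym2.ind with
  | _ x y =>
    rw [SimpleGraph.mem_edgeSet] at he
    refine ⟨G.subgraphOfAdj he, ⟨Subgraph.subgraphOfAdj_connected he, ⟨s(x, y), ?_⟩, ?_⟩, ?_⟩
    · rw [edgeSet_subgraphOfAdj]
      exact Set.mem_singleton _
    · intro u v _
      simp
    · rw [edgeSet_subgraphOfAdj]
      exact Set.mem_singleton _

lemma le_trussNumber [Fintype V] {G : SimpleGraph V} {k : ℕ} {H : G.Subgraph} {e : Sym2 V}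
    (ht : IsTruss G k H) (he : e ∈ H.edgeSet) : k ≤ trussNumber G e :=
  le_csSup (trussSet_bddAbove G e) ⟨H, ht, he⟩

lemma trussNumber_spec [Fintype V] {G : SimpleGraph V} {e : Sym2 V} (he : e ∈ G.edgeSet) :
    ∃ H : G.Subgraph, IsTruss G (trussNumber G e) H ∧ e ∈ H.edgeSet :=
  Nat.sSup_mem (s := {k : ℕ | ∃ H : G.Subgraph, IsTruss G k H ∧ e ∈ H.edgeSet})
    ⟨2, truss_two he⟩ (trussSet_bddAbove G e)

lemma truss_mono {G : SimpleGraph V} {j k : ℕ} {H : G.Subgraph} (h : IsTruss G k H)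
    (hjk : j ≤ k) : IsTruss G j H :=
  ⟨h.1, h.2.1, fun a b hab => le_trans (Nat.sub_le_sub_right hjk 2) (h.2.2 a b hab)⟩

lemma suppSet_mono [Fintype V] {G : SimpleGraph V} {H K : G.Subgraph} (h : H ≤ K) (x y : V) :
    {c : V | H.Adj x c ∧ H.Adj y c}.ncard ≤ {c : V | K.Adj x c ∧ K.Adj y c}.ncard :=
  Set.ncard_le_ncard (fun c hc => ⟨h.2 hc.1, h.2 hc.2⟩) (Set.toFinite _)

lemma finsetSup_adj {G : SimpleGraph V} (s : Finset G.Subgraph) (x y : V) :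
    (s.sup id).Adj x y ↔ ∃ T ∈ s, T.Adj x y := by
  classical
  induction s using Finset.induction with
  | empty => simp
  | insert T s' h ih => simp [Finset.sup_insert, Subgraph.sup_adj, ih]

lemma connected_sup_finset {G : SimpleGraph V} {a b : V} {H : G.Subgraph}
    (hH : H.Connected) (ha : a ∈ H.verts) (hb : b ∈ H.verts)
    (s : Finset G.Subgraph) (hs : ∀ T ∈ s, T.Connected ∧ (a ∈ T.verts ∨ b ∈ T.verts)) :
    (H ⊔ s.sup id).Connected := by
  classical
  induction s using Finset.induction with
  | empty => simpa using hH
  | insert T s' h ih =>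
    rw [Finset.sup_insert]
    have h1 : (H ⊔ s'.sup id).Connected := ih (fun T' ht => hs T' (Finset.mem_insert_of_mem ht))
    have h2 := hs T (Finset.mem_insert_self T s')
    have heq : H ⊔ (id T ⊔ s'.sup id) = T ⊔ (H ⊔ s'.sup id) := by
      simp only [id]
      rw [sup_left_comm]
    rw [heq]
    refine Subgraph.connected_sup h2.1.preconnected h1.preconnected ?_
    rcases h2.2 with hv | hv
    · exact ⟨a, hv, Or.inl ha⟩
    · exact ⟨b, hv, Or.inl hb⟩

lemma reachable_trans' {W : Type*} {A B : SimpleGraph W}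
    (h : ∀ x y, A.Adj x y → B.Reachable x y) {u v : W} (huv : A.Reachable u v) :
    B.Reachable u v := by
  obtain ⟨w⟩ := huv
  induction w with
  | nil => exact Reachable.refl _
  | cons ha _ ih => exact (h _ _ ha).trans ih

lemma connected_deleteEdge {G : SimpleGraph V} {H : G.Subgraph} (hc : H.Connected)
    {a b c : V} (hac : H.Adj a c) (hbc : H.Adj b c)
    (h1 : s(a, c) ≠ s(a, b)) (h2 : s(b, c) ≠ s(a, b)) :
    (H.deleteEdges {s(a, b)}).Connected := by
  set K := H.deleteEdges {s(a, b)} with hK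
  have hadjK : ∀ x y : V, H.Adj x y → s(x, y) ≠ s(a, b) → K.Adj x y := by
    intro x y hxy hne
    rw [hK, Subgraph.deleteEdges_adj]
    exact ⟨hxy, by simpa using hne⟩
  have hmema : a ∈ K.verts := H.edge_vert hac
  have hmemc : c ∈ K.verts := H.edge_vert hac.symm
  have hmemb : b ∈ K.verts := H.edge_vert hbc
  have hreach_ab : K.coe.Reachable ⟨a, hmema⟩ ⟨b, hmemb⟩ := by
    have r1 : K.coe.Adj ⟨a, hmema⟩ ⟨c, hmemc⟩ := hadjK a c hac h1
    have r2 : K.coe.Adj ⟨c, hmemc⟩ ⟨b, hmemb⟩ := (hadjK b c hbc h2).symm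
    exact r1.reachable.trans r2.reachable
  rw [Subgraph.connected_iff] at hc ⊢
  refine ⟨⟨?_⟩, hc.2⟩
  intro x y
  refine reachable_trans' (A := H.coe) ?_ (hc.1.coe x y)
  intro u v huv
  by_cases hne : s((u : V), (v : V)) = s(a, b)
  · rw [Sym2.eq_iff] at hne
    rcases hne with ⟨hua, hvb⟩ | ⟨hub, hva⟩
    · rw [show u = ⟨a, hmema⟩ from Subtype.ext hua, show v = ⟨b, hmemb⟩ from Subtype.ext hvb]
      exact hreach_ab
    · rw [show u = ⟨b, hmemb⟩ from Subtype.ext hub, show v = ⟨a, hmema⟩ from Subtype.ext hva]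
      exact hreach_ab.symm
  · have hKadj : K.coe.Adj u v := hadjK _ _ huv hne
    exact hKadj.reachable

end Aux

theorem stmt7 [Fintype V] (G : SimpleGraph V) (a b : V) (hab : G.Adj a b)
    (hS : (commonNbrs G a b).Nonempty) (hk : kmin G a b ≤ trussNumber G s(a, b)) :
    ∀ e' ∈ G.edgeSet, e' ≠ s(a, b) →
      trussNumber (G.deleteEdges {s(a, b)}) e' ≠ trussNumber G e' →
      kmin G a b ≤ trussNumber G e' ∧ trussNumber G e' ≤ trussNumber G s(a, b) := by
  classical
  intro e'
  induction e' using Sym2.ind with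
  | _ u v =>
  intro he' hne hchange
  set G' := G.deleteEdges {s(a, b)} with hG'
  have hlift : G' ≤ G := SimpleGraph.deleteEdges_le _
  have he'G' : s(u, v) ∈ G'.edgeSet := by
    rw [hG', edgeSet_deleteEdges]
    exact ⟨he', by simpa using hne⟩
  set φ := trussNumber G s(u, v) with hφ
  -- deleting an edge does not increase the truss number
  have hle : trussNumber G' s(u, v) ≤ φ := by
    obtain ⟨H', hH', hmem⟩ := trussNumber_spec he'G'
    exact le_trussNumber (liftSub_isTruss hlift hH') (liftSub_edge hlift hmem)
  have hlt : trussNumber G' s(u, v) < φ := lt_of_le_of_ne hle hchange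
  -- a φ-truss containing e'
  obtain ⟨H, hH, hmem⟩ := trussNumber_spec he'
  -- it must contain the edge (a, b)
  have hab_in : s(a, b) ∈ H.edgeSet := by
    by_contra hcon
    have hav : ∀ x y, H.Adj x y → s(x, y) ∉ ({s(a, b)} : Set (Sym2 V)) := by
      intro x y hxy hmem'
      rw [Set.mem_singleton_iff] at hmem'
      exact hcon (hmem' ▸ (Subgraph.mem_edgeSet.mpr hxy))
    have h5 : φ ≤ trussNumber G' s(u, v) :=
      le_trussNumber (restrictSub_isTruss hav hH)
        (show s(u, v) ∈ (restrictSub G _ H hav).edgeSet from hmem)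
    omega
  have hadjab : H.Adj a b := Subgraph.mem_edgeSet.mp hab_in
  refine ⟨?_, le_trussNumber hH hab_in⟩
  -- lower bound by contradiction
  by_contra hcon
  push_neg at hcon
  have hside_lb : ∀ e₀ ∈ sideEdges G a b, φ + 1 ≤ trussNumber G e₀ := by
    intro e₀ he₀
    have h6 : kmin G a b ≤ trussNumber G e₀ := Nat.sInf_le (Set.mem_image_of_mem _ he₀)
    omega
  have hside_edge : ∀ e₀ ∈ sideEdges G a b, e₀ ∈ G.edgeSet := by
    rintro e₀ ⟨c, hc1, hc2, hc3 | hc3⟩ <;> subst hc3 <;> rwa [SimpleGraph.mem_edgeSet]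
  have hch : ∀ e₀ : Sym2 V, ∃ T : G.Subgraph,
      e₀ ∈ sideEdges G a b → IsTruss G (φ + 1) T ∧ e₀ ∈ T.edgeSet := by
    intro e₀
    by_cases he₀ : e₀ ∈ sideEdges G a b
    · obtain ⟨T, hT, hTe⟩ := trussNumber_spec (hside_edge e₀ he₀)
      exact ⟨T, fun _ => ⟨truss_mono hT (hside_lb e₀ he₀), hTe⟩⟩
    · exact ⟨H, fun h => absurd h he₀⟩
  choose t ht using hch
  have hfin : (sideEdges G a b).Finite := Set.toFinite _
  set S : Finset G.Subgraph := hfin.toFinset.image t with hSdef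
  set H2 : G.Subgraph := H ⊔ S.sup id with hH2
  have hHle : H ≤ H2 := le_sup_left
  have hTle : ∀ e₀ ∈ sideEdges G a b, t e₀ ≤ H2 := fun e₀ he₀ =>
    le_trans (Finset.le_sup (f := id)
      (Finset.mem_image_of_mem t (hfin.mem_toFinset.mpr he₀))) le_sup_right
  have hH2adj : ∀ x y, H2.Adj x y → H.Adj x y ∨ ∃ e₀ ∈ sideEdges G a b, (t e₀).Adj x y := by
    intro x y hxy
    rw [hH2, Subgraph.sup_adj, finsetSup_adj] at hxy
    rcases hxy with h | ⟨T, hT, hTadj⟩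
    · exact Or.inl h
    · rw [hSdef, Finset.mem_image] at hT
      obtain ⟨e₀, he₀, rfl⟩ := hT
      exact Or.inr ⟨e₀, hfin.mem_toFinset.mp he₀, hTadj⟩
  have hstrong : ∀ x y, (∃ e₀ ∈ sideEdges G a b, (t e₀).Adj x y) →
      φ - 1 ≤ {c : V | H2.Adj x c ∧ H2.Adj y c}.ncard := by
    rintro x y ⟨e₀, he₀, hadj⟩
    have h1 := ((ht e₀ he₀).1).2.2 x y hadj
    have h2 := suppSet_mono (hTle e₀ he₀) x y
    omega
  have hweak : ∀ x y, H2.Adj x y → φ - 2 ≤ {c : V | H2.Adj x c ∧ H2.Adj y c}.ncard := by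
    intro x y hxy
    rcases hH2adj x y hxy with h | h
    · exact le_trans (hH.2.2 x y h) (suppSet_mono hHle x y)
    · have h7 := hstrong x y h
      omega
  have hH2conn : H2.Connected := by
    refine connected_sup_finset hH.1 (H.edge_vert hadjab) (H.edge_vert hadjab.symm) S ?_
    intro T hT
    rw [hSdef, Finset.mem_image] at hT
    obtain ⟨e₀, he₀F, rfl⟩ := hT
    have he₀ := hfin.mem_toFinset.mp he₀F
    obtain ⟨hTt, hTe⟩ := ht e₀ he₀
    refine ⟨hTt.1, ?_⟩
    obtain ⟨c, hc1, hc2, hc3 | hc3⟩ := he₀ <;> subst hc3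
    · exact Or.inl ((t _).edge_vert (Subgraph.mem_edgeSet.mp hTe))
    · exact Or.inr ((t _).edge_vert (Subgraph.mem_edgeSet.mp hTe))
  -- the common neighbor used to keep connectivity
  obtain ⟨c₀, hc₀a, hc₀b⟩ := hS
  have hsac : s(a, c₀) ∈ sideEdges G a b := ⟨c₀, hc₀a, hc₀b, Or.inl rfl⟩
  have hsbc : s(b, c₀) ∈ sideEdges G a b := ⟨c₀, hc₀a, hc₀b, Or.inr rfl⟩
  have hca : c₀ ≠ a := fun h => G.irrefl (h ▸ hc₀a)
  have hcb : c₀ ≠ b := fun h => G.irrefl (h ▸ hc₀b)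
  have hne_ac : s(a, c₀) ≠ s(a, b) := by
    intro h
    rcases Sym2.eq_iff.mp h with ⟨-, h2⟩ | ⟨h1, -⟩
    · exact hcb h2
    · exact hab.ne h1
  have hne_bc : s(b, c₀) ≠ s(a, b) := by
    intro h
    rcases Sym2.eq_iff.mp h with ⟨h1, -⟩ | ⟨-, h2⟩
    · exact hab.ne h1.symm
    · exact hca h2
  have hH2ac : H2.Adj a c₀ := (hTle _ hsac).2 (Subgraph.mem_edgeSet.mp (ht _ hsac).2)
  have hH2bc : H2.Adj b c₀ := (hTle _ hsbc).2 (Subgraph.mem_edgeSet.mp (ht _ hsbc).2)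
  have hKconn := connected_deleteEdge hH2conn hH2ac hH2bc hne_ac hne_bc
  set H0 : G.Subgraph := H2.deleteEdges {s(a, b)} with hH0
  have hH0adj : ∀ x y, H0.Adj x y ↔ H2.Adj x y ∧ s(x, y) ≠ s(a, b) := by
    intro x y
    rw [hH0, Subgraph.deleteEdges_adj]
    simp
  have havoid : ∀ x y, H0.Adj x y → s(x, y) ∉ ({s(a, b)} : Set (Sym2 V)) := by
    intro x y h
    simpa using ((hH0adj x y).mp h).2
  -- the triangle condition for H0
  have htri0 : ∀ x y, H0.Adj x y → φ - 2 ≤ {c : V | H0.Adj x c ∧ H0.Adj y c}.ncard := by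
    intro x y hxy
    obtain ⟨hxy2, hxyne⟩ := (hH0adj x y).mp hxy
    set S2 := {c : V | H2.Adj x c ∧ H2.Adj y c} with hS2
    set S0 := {c : V | H0.Adj x c ∧ H0.Adj y c} with hS0
    have hsub : S0 ⊆ S2 := fun c hc => ⟨((hH0adj x c).mp hc.1).1, ((hH0adj y c).mp hc.2).1⟩
    have hbadc : ∀ c ∈ S2 \ S0, s(x, c) = s(a, b) ∨ s(y, c) = s(a, b) := by
      rintro c ⟨hc2, hc0⟩
      by_contra hno
      push_neg at hno
      exact hc0 ⟨(hH0adj x c).mpr ⟨hc2.1, hno.1⟩, (hH0adj y c).mpr ⟨hc2.2, hno.2⟩⟩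
    by_cases hbad : (S2 \ S0).Nonempty
    · obtain ⟨d, hd⟩ := hbad
      have hxny : x ≠ y := hxy2.ne
      have hnotxy : ¬((x = a ∧ y = b) ∨ (x = b ∧ y = a)) := fun h => hxyne (Sym2.eq_iff.mpr h)
      have hmain : s(x, y) ∈ sideEdges G a b ∧ S2 \ S0 ⊆ {d} := by
        rcases hbadc d hd with h | h <;> rcases Sym2.eq_iff.mp h with ⟨h1, h2⟩ | ⟨h1, h2⟩ <;>
            subst h1 <;> subst h2
        · -- x = a, d = b
          refine ⟨⟨y, hxy2.adj_sub, (hd.1.2.adj_sub).symm, Or.inl rfl⟩, ?_⟩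
          intro c hc
          rcases hbadc c hc with h' | h'
          · rcases Sym2.eq_iff.mp h' with ⟨-, h2'⟩ | ⟨h1', -⟩
            · exact h2' ▸ rfl
            · exact absurd h1' hab.ne
          · rcases Sym2.eq_iff.mp h' with ⟨h1', -⟩ | ⟨h1', h2'⟩
            · exact absurd h1'.symm hxny
            · exact absurd (Or.inl ⟨rfl, h1'⟩) hnotxy
        · -- x = b, d = a
          refine ⟨⟨y, (hd.1.2.adj_sub).symm, hxy2.adj_sub, Or.inr rfl⟩, ?_⟩
          intro c hc
          rcases hbadc c hc with h' | h'
          · rcases Sym2.eq_iff.mp h' with ⟨h1', -⟩ | ⟨-, h2'⟩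
            · exact absurd h1'.symm hab.ne
            · exact h2' ▸ rfl
          · rcases Sym2.eq_iff.mp h' with ⟨h1', h2'⟩ | ⟨h1', -⟩
            · exact absurd (Or.inr ⟨rfl, h1'⟩) hnotxy
            · exact absurd h1'.symm hxny
        · -- y = a, d = b
          refine ⟨⟨x, hxy2.symm.adj_sub, (hd.1.1.adj_sub).symm, Or.inl Sym2.eq_swap⟩, ?_⟩
          intro c hc
          rcases hbadc c hc with h' | h'
          · rcases Sym2.eq_iff.mp h' with ⟨h1', -⟩ | ⟨h1', h2'⟩
            · exact absurd h1' hxny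
            · exact absurd (Or.inr ⟨h1', rfl⟩) hnotxy
          · rcases Sym2.eq_iff.mp h' with ⟨-, h2'⟩ | ⟨h1', -⟩
            · exact h2' ▸ rfl
            · exact absurd h1' hab.ne
        · -- y = b, d = a
          refine ⟨⟨x, (hd.1.1.adj_sub).symm, hxy2.symm.adj_sub, Or.inr Sym2.eq_swap⟩, ?_⟩
          intro c hc
          rcases hbadc c hc with h' | h'
          · rcases Sym2.eq_iff.mp h' with ⟨h1', h2'⟩ | ⟨h1', -⟩
            · exact absurd (Or.inl ⟨h1', rfl⟩) hnotxy
            · exact absurd h1' hxny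
          · rcases Sym2.eq_iff.mp h' with ⟨h1', -⟩ | ⟨-, h2'⟩
            · exact absurd h1'.symm hab.ne
            · exact h2' ▸ rfl
      have hstrongxy : φ - 1 ≤ S2.ncard :=
        hstrong x y ⟨s(x, y), hmain.1, Subgraph.mem_edgeSet.mp (ht _ hmain.1).2⟩
      have h1 : S2 \ {d} ⊆ S0 := by
        intro c hc
        by_contra hc0
        exact hc.2 (hmain.2 ⟨hc.1, hc0⟩)
      have h2 : (S2 \ {d}).ncard = S2.ncard - 1 :=
        Set.ncard_diff_singleton_of_mem hd.1
      have h3 : (S2 \ {d}).ncard ≤ S0.ncard := Set.ncard_le_ncard h1 (Set.toFinite _)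
      omega
    · have h8 : S2 ⊆ S0 := by
        intro c hc
        by_contra h
        exact hbad ⟨c, hc, h⟩
      have h9 := Set.ncard_le_ncard h8 (Set.toFinite _)
      have h10 : φ - 2 ≤ S2.ncard := hweak x y hxy2
      omega
  -- assemble the truss of G'
  have hmem0 : s(u, v) ∈ H0.edgeSet :=
    Subgraph.mem_edgeSet.mpr ((hH0adj u v).mpr ⟨hHle.2 (Subgraph.mem_edgeSet.mp hmem), hne⟩)
  have hH0truss : IsTruss G φ H0 := ⟨hKconn, ⟨s(u, v), hmem0⟩, htri0⟩
  have hfinal : φ ≤ trussNumber G' s(u, v) :=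
    le_trussNumber (restrictSub_isTruss havoid hH0truss)
      (show s(u, v) ∈ (restrictSub G _ H0 havoid).edgeSet from hmem0)
  omega
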